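/- (Operator norm localization for band operators on l^p, 1 ≤ p < ∞) Let 𝐗 = l^p(ℤᴺ, X) with 1 ≤ p < ∞ and let δ > 0. Then there exists D ∈ ℕ, depending only on δ, p, N and the band-width w, such that for every band operator B on 𝐗 of band-width at most w: (1−δ)‖B‖ ≤ sup{‖Bx‖/‖x‖ : x ≠ 0, diam(supp x) ≤ D} ≤ ‖B‖. -/

import Mathlib

open scoped ENNReal

section Aux

variable {ι X : Type*} [NormedAddCommGroup X] {p : ℝ≥0∞}

private lemma memℓp_indicator' (hp : 0 < p.toReal) (s : Set ι) (x : lp (fun _ : ι => X) p) :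
    Memℓp (s.indicator ⇑x) p := by
  apply memℓp_gen
  refine Summable.of_nonneg_of_le (fun i => Real.rpow_nonneg (norm_nonneg _) _)
    (fun i => Real.rpow_le_rpow (norm_nonneg _) ?_ hp.le) ((lp.memℓp x).summable hp)
  exact norm_indicator_le_norm_self _ _

private noncomputable def lpCut (hp : 0 < p.toReal) (s : Set ι) (x : lp (fun _ : ι => X) p) :
    lp (fun _ : ι => X) p := ⟨s.indicator ⇑x, memℓp_indicator' hp s x⟩

private lemma lpCut_apply (hp : 0 < p.toReal) (s : Set ι) (x : lp (fun _ : ι => X) p) (i : ι) :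
    (lpCut hp s x) i = s.indicator ⇑x i := rfl

private lemma tsum_pow_eq (hp : 0 < p.toReal) (y : lp (fun _ : ι => X) p) :
    ∑' i, (‖y i‖₊ : ℝ≥0∞) ^ p.toReal = ENNReal.ofReal (‖y‖ ^ p.toReal) := by
  rw [lp.norm_rpow_eq_tsum hp, ENNReal.ofReal_tsum_of_nonneg
    (fun i => Real.rpow_nonneg (norm_nonneg _) _) ((lp.memℓp y).summable hp)]
  congr 1; ext i
  rw [← ENNReal.ofReal_coe_nnreal, coe_nnnorm, ← ENNReal.ofReal_rpow_of_nonneg (norm_nonneg _) hp.le]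

end Aux

private lemma int_cube_diam {L a b t : ℤ} (hL : 0 < L) (h : (a - t) / L = (b - t) / L) :
    |a - b| ≤ L - 1 := by
  have h1 := Int.mul_ediv_add_emod (a - t) L
  have h2 := Int.mul_ediv_add_emod (b - t) L
  have h3 := Int.emod_nonneg (a - t) hL.ne'
  have h4 := Int.emod_nonneg (b - t) hL.ne'
  have h5 := Int.emod_lt_of_pos (a - t) hL
  have h6 := Int.emod_lt_of_pos (b - t) hL
  have key : a - b = (a - t) % L - (b - t) % L := by linear_combination h2 - h1 + L * h
  rw [abs_le]
  omega

private lemma int_good_squeeze {L a b t w : ℤ} (hL : 0 < L)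
    (hg : (a - w - t) / L = (a + w - t) / L) (h1 : a - w ≤ b) (h2 : b ≤ a + w) :
    (b - t) / L = (a - t) / L := by
  have e1 := Int.ediv_le_ediv hL (show a - w - t ≤ b - t by omega)
  have e2 := Int.ediv_le_ediv hL (show b - t ≤ a + w - t by omega)
  have e3 := Int.ediv_le_ediv hL (show a - w - t ≤ a - t by omega)
  have e4 := Int.ediv_le_ediv hL (show a - t ≤ a + w - t by omega)
  omega

private lemma int_bad_mod {L a t : ℤ} {w : ℤ} (hL : 0 < L) (hw : 0 ≤ w)
    (hbad : (a - w - t) / L ≠ (a + w - t) / L) : (a + w - t) % L < 2 * w := by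
  by_contra hc
  push_neg at hc
  apply hbad
  set v := a + w - t with hv
  have h1 := Int.mul_ediv_add_emod v L
  have hlt := Int.emod_lt_of_pos v hL
  have : a - w - t = (v % L - 2 * w) + L * (v / L) := by omega
  rw [this, Int.add_mul_ediv_left _ _ hL.ne',
    Int.ediv_eq_zero_of_lt (by omega) (by omega), zero_add]

private lemma int_bad_card {L : ℤ} (hL : 0 < L) (a : ℤ) (w : ℕ) :
    ((Finset.Ico (0:ℤ) L).filter
      (fun s => (a - w - s) / L ≠ (a + w - s) / L)).card ≤ 2 * w := by
  have : ((Finset.Ico (0:ℤ) L).filter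
      (fun s => (a - w - s) / L ≠ (a + w - s) / L)).card ≤ (Finset.Ico (0:ℤ) (2*w)).card := by
    apply Finset.card_le_card_of_injOn (fun s => (a + w - s) % L)
    · intro s hs
      simp only [Finset.mem_coe, Finset.mem_filter, Finset.mem_Ico] at hs ⊢
      exact ⟨Int.emod_nonneg _ hL.ne', int_bad_mod hL (by positivity) hs.2⟩
    · intro s1 h1 s2 h2 heq
      simp only [Finset.mem_coe, Finset.mem_filter, Finset.mem_Ico] at h1 h2
      have hdvd : L ∣ (a + w - s2) - (a + w - s1) := (Int.ModEq.dvd heq)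
      have habs : |a + w - s2 - (a + w - s1)| < L := by rw [abs_lt]; omega
      have := Int.eq_zero_of_abs_lt_dvd hdvd habs
      omega
  rw [Int.card_Ico] at this
  omega

private lemma count_bad {N : ℕ} {L : ℤ} (hL : 0 < L) (w : ℕ) (i : Fin N → ℤ) :
    ∑ t ∈ Fintype.piFinset (fun _ : Fin N => Finset.Ico (0:ℤ) L),
      (if ∀ d, (i d - w - t d) / L = (i d + w - t d) / L then (0:ℝ≥0∞) else 1)
      ≤ (2 * w * N : ℕ) * (L.toNat : ℝ≥0∞) ^ (N - 1) := by
  classical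
  set T := Fintype.piFinset (fun _ : Fin N => Finset.Ico (0:ℤ) L) with hT
  have step1 : ∀ t : Fin N → ℤ,
      (if ∀ d, (i d - w - t d) / L = (i d + w - t d) / L then (0:ℝ≥0∞) else 1)
      ≤ ∑ d : Fin N, (if (i d - w - t d) / L = (i d + w - t d) / L then (0:ℝ≥0∞) else 1) := by
    intro t
    split_ifs with h
    · exact zero_le
    · push_neg at h
      obtain ⟨d, hd⟩ := h
      calc (1:ℝ≥0∞) = if (i d - w - t d) / L = (i d + w - t d) / L then 0 else 1 := by
            rw [if_neg hd]
        _ ≤ _ := Finset.single_le_sum (f := fun d : Fin N =>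
            (if (i d - w - t d) / L = (i d + w - t d) / L then (0:ℝ≥0∞) else 1))
            (fun _ _ => zero_le) (Finset.mem_univ d)
  have perd : ∀ d : Fin N,
      ∑ t ∈ T, (if (i d - w - t d) / L = (i d + w - t d) / L then (0:ℝ≥0∞) else 1)
      ≤ (2 * w : ℕ) * (L.toNat : ℝ≥0∞) ^ (N - 1) := by
    intro d
    set A : ℤ → ℝ≥0∞ := fun s => if (i d - w - s) / L = (i d + w - s) / L then (0:ℝ≥0∞) else 1
      with hA
    have hprod : ∀ t : Fin N → ℤ,
        (∏ d' : Fin N, if d' = d then A (t d') else 1) = A (t d) := by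
      intro t
      rw [Finset.prod_ite_eq' Finset.univ d (fun d' => A (t d'))]
      simp
    have hswap := Finset.prod_univ_sum (fun _ : Fin N => Finset.Ico (0:ℤ) L)
      (fun d' s => if d' = d then A s else (1:ℝ≥0∞))
    have hsum : ∑ t ∈ T, A (t d) = ∏ d' : Fin N, ∑ s ∈ Finset.Ico (0:ℤ) L,
        (if d' = d then A s else (1:ℝ≥0∞)) := by
      rw [hswap]
      exact Finset.sum_congr rfl fun t _ => (hprod t).symm
    have hKle : ∑ s ∈ Finset.Ico (0:ℤ) L, A s ≤ ((2 * w : ℕ) : ℝ≥0∞) := by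
      have heq : ∀ s : ℤ,
          A s = if ¬ ((i d - w - s) / L = (i d + w - s) / L) then (1:ℝ≥0∞) else 0 := by
        intro s; rw [hA]; split_ifs with h1 <;> simp [h1]
      rw [Finset.sum_congr rfl fun s _ => heq s, Finset.sum_boole]
      exact_mod_cast Nat.cast_le.mpr (int_bad_card hL (i d) w)
    have hM : ∑ s ∈ Finset.Ico (0:ℤ) L, (1:ℝ≥0∞) = (L.toNat : ℝ≥0∞) := by
      rw [Finset.sum_const, Int.card_Ico, nsmul_eq_mul, mul_one]
      simp
    have hprodeval : (∏ d' : Fin N, ∑ s ∈ Finset.Ico (0:ℤ) L,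
        (if d' = d then A s else (1:ℝ≥0∞)))
        = (∑ s ∈ Finset.Ico (0:ℤ) L, A s) * (L.toNat : ℝ≥0∞) ^ (N - 1) := by
      have heq2 : ∀ d' : Fin N,
          (∑ s ∈ Finset.Ico (0:ℤ) L, (if d' = d then A s else (1:ℝ≥0∞)))
          = if d' = d then ∑ s ∈ Finset.Ico (0:ℤ) L, A s else (L.toNat : ℝ≥0∞) := by
        intro d'; split_ifs with h <;> simp [h, hM]
      rw [Finset.prod_congr rfl fun d' _ => heq2 d']
      rw [← Finset.mul_prod_erase Finset.univ _ (Finset.mem_univ d), if_pos rfl]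
      congr 1
      rw [Finset.prod_congr rfl (fun d' hd' => if_neg (Finset.ne_of_mem_erase hd')),
        Finset.prod_const, Finset.card_erase_of_mem (Finset.mem_univ d), Finset.card_univ,
        Fintype.card_fin]
    calc ∑ t ∈ T, A (t d) = _ := hsum
      _ = _ := hprodeval
      _ ≤ (2 * w : ℕ) * (L.toNat : ℝ≥0∞) ^ (N - 1) := mul_le_mul_left hKle _
  calc ∑ t ∈ T, (if ∀ d, (i d - w - t d) / L = (i d + w - t d) / L then (0:ℝ≥0∞) else 1)
      ≤ ∑ t ∈ T, ∑ d : Fin N,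
        (if (i d - w - t d) / L = (i d + w - t d) / L then (0:ℝ≥0∞) else 1) :=
        Finset.sum_le_sum fun t _ => step1 t
    _ = ∑ d : Fin N, ∑ t ∈ T,
        (if (i d - w - t d) / L = (i d + w - t d) / L then (0:ℝ≥0∞) else 1) := Finset.sum_comm
    _ ≤ ∑ _d : Fin N, (2 * w : ℕ) * (L.toNat : ℝ≥0∞) ^ (N - 1) :=
        Finset.sum_le_sum fun d _ => perd d
    _ = (2 * w * N : ℕ) * (L.toNat : ℝ≥0∞) ^ (N - 1) := by
        rw [Finset.sum_const, Finset.card_univ, Fintype.card_fin, nsmul_eq_mul]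
        push_cast
        ring

private lemma key_estimate {N : ℕ} {X : Type*} [NormedAddCommGroup X] [NormedSpace ℝ X]
    {p : ENNReal} [Fact (1 ≤ p)] (hp : p ≠ ⊤)
    {w : ℕ} (B : lp (fun _ : Fin N → ℤ => X) p →L[ℝ] lp (fun _ : Fin N → ℤ => X) p)
    (hB : ∀ (i : Fin N → ℤ) (x y : lp (fun _ : Fin N → ℤ => X) p),
      (∀ j : Fin N → ℤ, (∀ d, |i d - j d| ≤ (w : ℤ)) → x j = y j) → B x i = B y i)
    {c : ℝ} (hc0 : 0 ≤ c) {Lnat : ℕ} (hL1 : 1 ≤ Lnat)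
    (hc : ∀ y : lp (fun _ : Fin N → ℤ => X) p,
      (∀ i j : Fin N → ℤ, y i ≠ 0 → y j ≠ 0 → ∀ d, |i d - j d| ≤ (Lnat : ℤ)) → ‖B y‖ ≤ c * ‖y‖)
    (x : lp (fun _ : Fin N → ℤ => X) p) :
    ‖B x‖ ^ p.toReal * (1 - (2 * w * N : ℝ) / Lnat) ≤ c ^ p.toReal * ‖x‖ ^ p.toReal := by
  classical
  have hpr1 : 1 ≤ p.toReal := by
    have h1 : (1 : ℝ≥0∞) ≤ p := Fact.out
    simpa using ENNReal.toReal_mono hp h1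
  have hpr0 : 0 < p.toReal := lt_of_lt_of_le one_pos hpr1
  set pr := p.toReal with hprdef
  set L : ℤ := (Lnat : ℤ) with hLdef
  have hL : 0 < L := by
    rw [hLdef]; exact_mod_cast hL1
  set g : (Fin N → ℤ) → ℝ≥0∞ := fun i => (‖B x i‖₊ : ℝ≥0∞) ^ pr with hg
  set T := Fintype.piFinset (fun _ : Fin N => Finset.Ico (0:ℤ) L) with hTdef
  have hTne : T.Nonempty := by
    refine ⟨fun _ => 0, ?_⟩
    rw [hTdef, Fintype.mem_piFinset]
    intro d
    rw [Finset.mem_Ico]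
    omega
  set F : (Fin N → ℤ) → ℝ≥0∞ := fun t =>
    ∑' i, (if ∀ d, (i d - w - t d) / L = (i d + w - t d) / L then 0 else g i) with hF
  have hsumF : ∑ t ∈ T, F t ≤ ((2*w*N : ℕ) * (L.toNat : ℝ≥0∞)^(N-1)) * ∑' i, g i := by
    rw [hF, ← Summable.tsum_finsetSum (fun _ _ => ENNReal.summable)]
    calc ∑' i, ∑ t ∈ T, (if ∀ d, (i d - w - t d) / L = (i d + w - t d) / L then 0 else g i)
        ≤ ∑' i, ((2*w*N : ℕ) * (L.toNat : ℝ≥0∞)^(N-1)) * g i := by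
          refine Summable.tsum_le_tsum (fun i => ?_) ENNReal.summable ENNReal.summable
          have heq : ∀ t : Fin N → ℤ,
              (if ∀ d, (i d - w - t d) / L = (i d + w - t d) / L then 0 else g i)
              = (if ∀ d, (i d - w - t d) / L = (i d + w - t d) / L then (0:ℝ≥0∞) else 1)
                * g i := by
            intro t; split_ifs <;> simp
          rw [Finset.sum_congr rfl fun t _ => heq t, ← Finset.sum_mul]
          exact mul_le_mul_left (count_bad hL w i) _
      _ = _ := ENNReal.tsum_mul_left
  obtain ⟨t, htT, hmin⟩ := Finset.exists_min_image T F hTne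
  have hcardT : T.card = Lnat ^ N := by
    rw [hTdef, Fintype.card_piFinset]
    simp [Int.card_Ico, hLdef]
  have hcard_min : ((Lnat : ℝ≥0∞) ^ N) * F t
      ≤ ((2*w*N : ℕ) * (L.toNat : ℝ≥0∞)^(N-1)) * ∑' i, g i := by
    calc ((Lnat : ℝ≥0∞) ^ N) * F t = T.card • F t := by
          rw [hcardT, nsmul_eq_mul]; push_cast; ring
      _ ≤ ∑ t' ∈ T, F t' := Finset.card_nsmul_le_sum T F _ (fun t' ht' => hmin t' ht')
      _ ≤ _ := hsumF
  set e : ℝ := (2 * w * N : ℝ) / Lnat with hedef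
  have he0 : 0 ≤ e := by positivity
  have hLtoNat : L.toNat = Lnat := by rw [hLdef]; exact Int.toNat_natCast Lnat
  have hLn0 : ((Lnat : ℝ≥0∞)) ≠ 0 := by
    simp only [ne_eq, Nat.cast_eq_zero]; omega
  have hLnt : ((Lnat : ℝ≥0∞)) ≠ ⊤ := ENNReal.natCast_ne_top Lnat
  have hofe : ENNReal.ofReal e = ((2*w*N : ℕ) : ℝ≥0∞) / (Lnat : ℝ≥0∞) := by
    rw [hedef, ENNReal.ofReal_div_of_pos (by exact_mod_cast Nat.pos_of_ne_zero (by omega))]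
    congr 1
    · rw [show (2 * (w:ℝ) * N) = ((2*w*N : ℕ) : ℝ) by push_cast; ring, ENNReal.ofReal_natCast]
    · rw [ENNReal.ofReal_natCast]
  have hFt : F t ≤ ENNReal.ofReal e * ∑' i, g i := by
    rcases Nat.eq_zero_or_pos N with hN | hN
    · have hzero : ((2*w*N : ℕ) : ℝ≥0∞) = 0 := by subst hN; simp
      have : ((Lnat : ℝ≥0∞) ^ N) * F t ≤ 0 := by
        refine hcard_min.trans (le_of_eq ?_)
        rw [hzero, zero_mul, zero_mul]
      have hF0 : F t = 0 := by
        subst hN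
        simpa using this
      rw [hF0]; exact zero_le
    · rw [← ENNReal.mul_le_mul_iff_right (a := (Lnat : ℝ≥0∞) ^ N)
        (pow_ne_zero _ hLn0) (ENNReal.pow_ne_top hLnt)]
      refine hcard_min.trans (le_of_eq ?_)
      rw [hofe, hLtoNat]
      have hpow : (Lnat : ℝ≥0∞) ^ N = (Lnat : ℝ≥0∞) ^ (N - 1) * (Lnat : ℝ≥0∞) := by
        rw [← pow_succ]; congr 1; omega
      rw [hpow]
      have hcan : (Lnat : ℝ≥0∞) * (((2*w*N : ℕ) : ℝ≥0∞) / (Lnat : ℝ≥0∞))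
          = ((2*w*N : ℕ) : ℝ≥0∞) := ENNReal.mul_div_cancel' (fun h => absurd h hLn0) (fun h => absurd h hLnt)
      conv_lhs => rw [← hcan]
      ring
  -- the cube decomposition
  set cfn : (Fin N → ℤ) → (Fin N → ℤ) := fun j d => (j d - t d) / L with hcfn
  set XX : (Fin N → ℤ) → lp (fun _ : Fin N → ℤ => X) p :=
    fun ζ => lpCut hpr0 {j | cfn j = ζ} x with hXX
  have hXXapp : ∀ ζ i, (XX ζ) i = if cfn i = ζ then x i else 0 := by
    intro ζ i
    rw [hXX]
    rw [lpCut_apply]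
    by_cases h : cfn i = ζ
    · rw [if_pos h]
      exact Set.indicator_of_mem (show i ∈ {j | cfn j = ζ} from h) ⇑x
    · rw [if_neg h]
      exact Set.indicator_of_notMem (show i ∉ {j | cfn j = ζ} from h) ⇑x
  -- diam bound for XX ζ
  have hXXdiam : ∀ ζ, ∀ i j : Fin N → ℤ, (XX ζ) i ≠ 0 → (XX ζ) j ≠ 0 →
      ∀ d, |i d - j d| ≤ (Lnat : ℤ) := by
    intro ζ i j hi hj d
    rw [hXXapp] at hi hj
    have hci : cfn i = ζ := by by_contra h; rw [if_neg h] at hi; exact hi rfl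
    have hcj : cfn j = ζ := by by_contra h; rw [if_neg h] at hj; exact hj rfl
    have : (i d - t d) / L = (j d - t d) / L := by
      have := congrFun hci d
      have := congrFun hcj d
      simp only [hcfn] at *
      omega
    have := int_cube_diam hL this
    omega
  -- good identity
  have hid : ∀ i : Fin N → ℤ, (∀ d, (i d - w - t d) / L = (i d + w - t d) / L) →
      B x i = B (XX (cfn i)) i := by
    intro i hGood
    refine hB i x (XX (cfn i)) (fun j hj => ?_)
    have hmem : cfn j = cfn i := by
      funext d
      have habs := hj d
      rw [abs_le] at habs
      exact int_good_squeeze hL (hGood d) (by omega) (by omega)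
    rw [hXXapp, if_pos hmem]
  -- split
  have hsplit : ∑' i, g i
      = (∑' i, (if ∀ d, (i d - w - t d) / L = (i d + w - t d) / L then g i else 0)) + F t := by
    rw [hF, ← ENNReal.tsum_add]
    congr 1; funext i; split_ifs <;> simp
  -- good part bound
  have hA1 : ∑' ζ, ENNReal.ofReal (‖XX ζ‖ ^ pr) = ∑' i, (‖x i‖₊ : ℝ≥0∞) ^ pr := by
    have h1 : ∀ ζ, ENNReal.ofReal (‖XX ζ‖ ^ pr)
        = ∑' i, (if ζ = cfn i then (‖x i‖₊ : ℝ≥0∞) ^ pr else 0) := by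
      intro ζ
      rw [← tsum_pow_eq hpr0 (XX ζ)]
      congr 1; funext i
      rw [hXXapp]
      by_cases h : cfn i = ζ
      · rw [if_pos h, if_pos h.symm]
      · rw [if_neg h, if_neg (fun hh => h hh.symm)]
        simpa [ENNReal.zero_rpow_of_pos hpr0] using hpr0
    rw [tsum_congr h1, ENNReal.tsum_comm]
    exact tsum_congr fun i => tsum_ite_eq (cfn i) _
  have hgood : (∑' i, (if ∀ d, (i d - w - t d) / L = (i d + w - t d) / L then g i else 0))
      ≤ ENNReal.ofReal (c ^ pr) * ∑' i, (‖x i‖₊ : ℝ≥0∞) ^ pr := by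
    calc (∑' i, (if ∀ d, (i d - w - t d) / L = (i d + w - t d) / L then g i else 0))
        ≤ ∑' i, (‖B (XX (cfn i)) i‖₊ : ℝ≥0∞) ^ pr := by
          refine Summable.tsum_le_tsum (fun i => ?_) ENNReal.summable ENNReal.summable
          split_ifs with h
          · rw [hg]
            simp only []
            rw [hid i h]
          · exact zero_le
      _ = ∑' i, ∑' ζ, (if ζ = cfn i then (‖B (XX (cfn i)) i‖₊ : ℝ≥0∞) ^ pr else 0) := by
          exact tsum_congr fun i => (tsum_ite_eq (cfn i) (fun _ => (‖B (XX (cfn i)) i‖₊ : ℝ≥0∞) ^ pr)).symm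
      _ = ∑' ζ, ∑' i, (if ζ = cfn i then (‖B (XX (cfn i)) i‖₊ : ℝ≥0∞) ^ pr else 0) :=
          ENNReal.tsum_comm
      _ ≤ ∑' ζ, ∑' i, (‖B (XX ζ) i‖₊ : ℝ≥0∞) ^ pr := by
          refine Summable.tsum_le_tsum (fun ζ => Summable.tsum_le_tsum (fun i => ?_)
            ENNReal.summable ENNReal.summable) ENNReal.summable ENNReal.summable
          split_ifs with h
          · rw [h]
          · exact zero_le
      _ = ∑' ζ, ENNReal.ofReal (‖B (XX ζ)‖ ^ pr) :=
          tsum_congr fun ζ => tsum_pow_eq hpr0 _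
      _ ≤ ∑' ζ, ENNReal.ofReal (c ^ pr) * ENNReal.ofReal (‖XX ζ‖ ^ pr) := by
          refine Summable.tsum_le_tsum (fun ζ => ?_) ENNReal.summable ENNReal.summable
          rw [← ENNReal.ofReal_mul (by positivity)]
          refine ENNReal.ofReal_le_ofReal ?_
          calc ‖B (XX ζ)‖ ^ pr ≤ (c * ‖XX ζ‖) ^ pr :=
                Real.rpow_le_rpow (norm_nonneg _) (hc (XX ζ) (hXXdiam ζ)) hpr0.le
            _ = c ^ pr * ‖XX ζ‖ ^ pr := Real.mul_rpow hc0 (norm_nonneg _)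
      _ = ENNReal.ofReal (c ^ pr) * ∑' ζ, ENNReal.ofReal (‖XX ζ‖ ^ pr) :=
          ENNReal.tsum_mul_left
      _ = _ := by rw [hA1]
  -- combine
  have main : ∑' i, g i ≤ ENNReal.ofReal (c ^ pr) * ∑' i, (‖x i‖₊ : ℝ≥0∞) ^ pr
      + ENNReal.ofReal e * ∑' i, g i := by
    calc ∑' i, g i = _ + F t := hsplit
      _ ≤ _ := add_le_add hgood hFt
  have hgx : ∑' i, g i = ENNReal.ofReal (‖B x‖ ^ pr) := tsum_pow_eq hpr0 (B x)
  have hxx : ∑' i, (‖x i‖₊ : ℝ≥0∞) ^ pr = ENNReal.ofReal (‖x‖ ^ pr) := tsum_pow_eq hpr0 x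
  rw [hgx, hxx] at main
  have hfin : ENNReal.ofReal (c ^ pr) * ENNReal.ofReal (‖x‖ ^ pr)
      + ENNReal.ofReal e * ENNReal.ofReal (‖B x‖ ^ pr) ≠ ⊤ := by
    refine ENNReal.add_ne_top.mpr ⟨?_, ?_⟩ <;>
      exact ENNReal.mul_ne_top ENNReal.ofReal_ne_top ENNReal.ofReal_ne_top
  have hreal := ENNReal.toReal_mono hfin main
  rw [ENNReal.toReal_add (ENNReal.mul_ne_top ENNReal.ofReal_ne_top ENNReal.ofReal_ne_top)
      (ENNReal.mul_ne_top ENNReal.ofReal_ne_top ENNReal.ofReal_ne_top),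
    ENNReal.toReal_mul, ENNReal.toReal_mul,
    ENNReal.toReal_ofReal (by positivity), ENNReal.toReal_ofReal (by positivity),
    ENNReal.toReal_ofReal (by positivity), ENNReal.toReal_ofReal he0] at hreal
  -- hreal : ‖B x‖ ^ pr ≤ c ^ pr * ‖x‖ ^ pr + e * ‖B x‖ ^ pr
  nlinarith [hreal]

/-- Operator norm localization for band operators on `l^p(ℤᴺ, X)`,
`1 ≤ p < ∞`: for every `δ > 0` there is `D ∈ ℕ` (depending only on `δ`, `p`,
`N` and the band-width `w`) such that for every band operator `B` of
band-width at most `w` (i.e. `(Bx)ᵢ` only depends on the entries `xⱼ` with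
`|i - j|_∞ ≤ w`), the supremum of `‖Bx‖/‖x‖` over `x ≠ 0` with support of
diameter at most `D` lies between `(1 - δ)‖B‖` and `‖B‖`. -/
theorem band_operator_norm_localization_lp
    {N : ℕ} {X : Type*} [NormedAddCommGroup X] [NormedSpace ℝ X]
    (p : ENNReal) [Fact (1 ≤ p)] (hp : p ≠ ⊤)
    (w : ℕ) (δ : ℝ) (hδ : 0 < δ) :
    ∃ D : ℕ,
      ∀ B : lp (fun _ : Fin N → ℤ => X) p →L[ℝ] lp (fun _ : Fin N → ℤ => X) p,
        (∀ (i : Fin N → ℤ) (x y : lp (fun _ : Fin N → ℤ => X) p),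
          (∀ j : Fin N → ℤ, (∀ d, |i d - j d| ≤ (w : ℤ)) → x j = y j) →
          B x i = B y i) →
        (1 - δ) * ‖B‖ ≤
            sSup {r : ℝ | ∃ x : lp (fun _ : Fin N → ℤ => X) p, x ≠ 0 ∧
              (∀ i j : Fin N → ℤ, x i ≠ 0 → x j ≠ 0 →
                ∀ d, |i d - j d| ≤ (D : ℤ)) ∧
              r = ‖B x‖ / ‖x‖} ∧
          sSup {r : ℝ | ∃ x : lp (fun _ : Fin N → ℤ => X) p, x ≠ 0 ∧
              (∀ i j : Fin N → ℤ, x i ≠ 0 → x j ≠ 0 →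
                ∀ d, |i d - j d| ≤ (D : ℤ)) ∧
              r = ‖B x‖ / ‖x‖} ≤ ‖B‖ := by
  classical
  have hpr1 : 1 ≤ p.toReal := by
    have h1 : (1 : ℝ≥0∞) ≤ p := Fact.out
    simpa using ENNReal.toReal_mono hp h1
  have hpr0 : 0 < p.toReal := lt_of_lt_of_le one_pos hpr1
  set δ₀ : ℝ := min δ (1/2) with hδ₀def
  have hδ₀pos : 0 < δ₀ := lt_min hδ (by norm_num)
  have hδ₀le : δ₀ ≤ 1/2 := min_le_right _ _
  have hδ₀δ : δ₀ ≤ δ := min_le_left _ _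
  have hδ₀1 : 0 < 1 - δ₀ := by linarith
  set Lnat : ℕ := max 1 (Nat.ceil ((2*w*N : ℝ)/δ₀)) with hLnatdef
  have hL1 : 1 ≤ Lnat := le_max_left _ _
  refine ⟨Lnat, fun B hB => ?_⟩
  set S := {r : ℝ | ∃ x : lp (fun _ : Fin N → ℤ => X) p, x ≠ 0 ∧
      (∀ i j : Fin N → ℤ, x i ≠ 0 → x j ≠ 0 →
        ∀ d, |i d - j d| ≤ ((Lnat : ℕ) : ℤ)) ∧
      r = ‖B x‖ / ‖x‖} with hSdef
  have hSub : ∀ r ∈ S, r ≤ ‖B‖ := by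
    rintro r ⟨x, hx0, -, rfl⟩
    rw [div_le_iff₀ (norm_pos_iff.mpr hx0)]
    exact B.le_opNorm x
  have hbdd : BddAbove S := ⟨‖B‖, hSub⟩
  have hupper : sSup S ≤ ‖B‖ := Real.sSup_le hSub (norm_nonneg B)
  refine ⟨?_, hupper⟩
  have hc0 : 0 ≤ sSup S := by
    refine Real.sSup_nonneg ?_
    rintro r ⟨x, hx0, -, rfl⟩
    positivity
  by_cases hδ1 : 1 - δ ≤ 0
  · exact le_trans (mul_nonpos_of_nonpos_of_nonneg hδ1 (norm_nonneg B)) hc0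
  push_neg at hδ1
  set c := sSup S with hcdef
  have hc : ∀ y : lp (fun _ : Fin N → ℤ => X) p,
      (∀ i j : Fin N → ℤ, y i ≠ 0 → y j ≠ 0 → ∀ d, |i d - j d| ≤ (Lnat : ℤ)) →
      ‖B y‖ ≤ c * ‖y‖ := by
    intro y hy
    by_cases h0 : y = 0
    · simp [h0]
    · have hr : ‖B y‖ / ‖y‖ ∈ S := ⟨y, h0, hy, rfl⟩
      have hle := le_csSup hbdd hr
      have hny : 0 < ‖y‖ := norm_pos_iff.mpr h0
      calc ‖B y‖ = (‖B y‖ / ‖y‖) * ‖y‖ := (div_mul_cancel₀ _ hny.ne').symm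
        _ ≤ c * ‖y‖ := mul_le_mul_of_nonneg_right hle hny.le
  set e : ℝ := (2 * w * N : ℝ) / Lnat with hedef
  have heδ : e ≤ δ₀ := by
    rw [hedef, div_le_iff₀ (by exact_mod_cast Nat.pos_of_ne_zero (by omega) : (0:ℝ) < (Lnat:ℝ))]
    calc (2 * w * N : ℝ) = δ₀ * ((2*w*N : ℝ)/δ₀) := by
          field_simp
      _ ≤ δ₀ * (Nat.ceil ((2*w*N : ℝ)/δ₀) : ℝ) :=
          mul_le_mul_of_nonneg_left (Nat.le_ceil _) hδ₀pos.le
      _ ≤ δ₀ * (Lnat : ℝ) := by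
          refine mul_le_mul_of_nonneg_left ?_ hδ₀pos.le
          have hle : Nat.ceil ((2*w*N : ℝ)/δ₀) ≤ Lnat := by
            rw [hLnatdef]; exact le_max_right _ _
          exact_mod_cast hle
  have key : ∀ x : lp (fun _ : Fin N → ℤ => X) p, ‖B x‖ ≤ (c / (1 - δ₀)) * ‖x‖ := by
    intro x
    have hkey := key_estimate hp B hB hc0 hL1 hc x
    rw [← hedef] at hkey
    have hBxpr : ‖B x‖ ^ p.toReal * (1 - δ₀) ≤ c ^ p.toReal * ‖x‖ ^ p.toReal := by
      have h1e : 1 - δ₀ ≤ 1 - e := by linarith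
      have hn : 0 ≤ ‖B x‖ ^ p.toReal := Real.rpow_nonneg (norm_nonneg _) _
      nlinarith
    rw [← Real.rpow_le_rpow_iff (norm_nonneg _) (by positivity) hpr0]
    have hrhs : ((c / (1 - δ₀)) * ‖x‖) ^ p.toReal
        = (c ^ p.toReal / (1 - δ₀) ^ p.toReal) * ‖x‖ ^ p.toReal := by
      rw [Real.mul_rpow (by positivity) (norm_nonneg _), Real.div_rpow hc0 hδ₀1.le]
    rw [hrhs]
    have hpow : (1 - δ₀) ^ p.toReal ≤ 1 - δ₀ := by
      calc (1 - δ₀) ^ p.toReal ≤ (1 - δ₀) ^ (1:ℝ) :=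
            Real.rpow_le_rpow_of_exponent_ge hδ₀1 (by linarith) hpr1
        _ = 1 - δ₀ := Real.rpow_one _
    have hpowpos : 0 < (1 - δ₀) ^ p.toReal := Real.rpow_pos_of_pos hδ₀1 _
    rw [div_mul_eq_mul_div, le_div_iff₀ hpowpos]
    calc ‖B x‖ ^ p.toReal * (1 - δ₀) ^ p.toReal ≤ ‖B x‖ ^ p.toReal * (1 - δ₀) :=
          mul_le_mul_of_nonneg_left hpow (Real.rpow_nonneg (norm_nonneg _) _)
      _ ≤ c ^ p.toReal * ‖x‖ ^ p.toReal := hBxpr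
  have hBle : ‖B‖ ≤ c / (1 - δ₀) := B.opNorm_le_bound (div_nonneg hc0 hδ₀1.le) key
  calc (1 - δ) * ‖B‖ ≤ (1 - δ₀) * ‖B‖ :=
        mul_le_mul_of_nonneg_right (by linarith) (norm_nonneg B)
    _ ≤ c := by
        rw [← le_div_iff₀' hδ₀1]
        exact hBle
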